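/- Exact conditioning identity: for density matrices ρ, σ and a positive semidefinite matrix A ≤ Id with tr(ρA), tr(σA) > 0, one has ‖√ρ A √σ‖₁² = F(ρ|√A, σ|√A) · tr(σA) · tr(ρA). -/

import Mathlib

open Matrix ComplexOrder

/-- The positive semidefinite square root, as `Matrix.PosSemidef.sqrt` was defined in Mathlib (Dec 2024). -/
noncomputable def Matrix.PosSemidef.sqrt {n 𝕜 : Type*} [Fintype n] [RCLike 𝕜] [DecidableEq n]
    {A : Matrix n n 𝕜} (hA : A.PosSemidef) : Matrix n n 𝕜 :=
  (hA.1.eigenvectorUnitary : Matrix n n 𝕜) * diagonal ((↑) ∘ Real.sqrt ∘ hA.1.eigenvalues : n → 𝕜) *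
    (star hA.1.eigenvectorUnitary : Matrix n n 𝕜)

/-- The Schatten 1-norm (trace norm): ‖M‖₁ = tr √(MᴴM). -/
noncomputable def traceNorm {n m : Type*} [Fintype n] [Fintype m] [DecidableEq m]
    (M : Matrix n m ℂ) : ℝ :=
  ((Matrix.posSemidef_conjTranspose_mul_self M).sqrt.trace).re

open scoped MatrixOrder in
lemma mySqrt_eq_cfc {n : Type*} [Fintype n] [DecidableEq n] {P : Matrix n n ℂ}
    (hP : P.PosSemidef) : hP.sqrt = CFC.sqrt P := by
  rw [CFC.sqrt_eq_cfc, cfc_nnreal_eq_real _ P hP.nonneg, hP.1.cfc_eq]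
  have hf : (fun x : ℝ => ((NNReal.sqrt x.toNNReal : NNReal) : ℝ)) = Real.sqrt := by
    funext x; rw [Real.sqrt]
  rw [hf]
  rfl

open scoped MatrixOrder in
lemma Matrix.PosSemidef.posSemidef_sqrt {n : Type*} [Fintype n] [DecidableEq n]
    {P : Matrix n n ℂ} (hP : P.PosSemidef) : hP.sqrt.PosSemidef := by
  rw [mySqrt_eq_cfc]
  exact (CFC.sqrt_nonneg P).posSemidef

open scoped MatrixOrder in
lemma Matrix.PosSemidef.sqrt_mul_self {n : Type*} [Fintype n] [DecidableEq n]
    {P : Matrix n n ℂ} (hP : P.PosSemidef) : hP.sqrt * hP.sqrt = P := by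
  rw [mySqrt_eq_cfc]
  exact CFC.sqrt_mul_sqrt_self P hP.nonneg

lemma Matrix.PosSemidef.sq_sqrt {n : Type*} [Fintype n] [DecidableEq n]
    {P : Matrix n n ℂ} (hP : P.PosSemidef) : hP.sqrt ^ 2 = P := by
  rw [sq, hP.sqrt_mul_self]

open scoped MatrixOrder in
lemma Matrix.PosSemidef.eq_sqrt_of_sq_eq {n : Type*} [Fintype n] [DecidableEq n]
    {P Q : Matrix n n ℂ} (hP : P.PosSemidef) (hQ : Q.PosSemidef) (h : P ^ 2 = Q) :
    P = hQ.sqrt := by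
  rw [mySqrt_eq_cfc]
  exact (CFC.sqrt_unique (by rw [← sq, h]) hP.nonneg).symm

open Polynomial in
lemma myEval_charpoly {d : ℕ} (M : Matrix (Fin d) (Fin d) ℂ) (x : ℂ) :
    M.charpoly.eval x = (x • (1 : Matrix (Fin d) (Fin d) ℂ) - M).det := by
  rw [Matrix.charpoly, ← Polynomial.coe_evalRingHom, RingHom.map_det]
  congr 1
  ext i j
  by_cases h : i = j
  · subst h
    simp [Matrix.charmatrix_apply_eq, Matrix.one_apply_eq]
  · simp [Matrix.charmatrix_apply_ne _ _ _ h, Matrix.one_apply_ne h]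

lemma myCharpoly_mul_comm {d : ℕ} (A B : Matrix (Fin d) (Fin d) ℂ) :
    (A * B).charpoly = (B * A).charpoly := by
  apply Polynomial.eq_of_infinite_eval_eq
  apply Set.Infinite.mono (s := {x : ℂ | x ≠ 0})
  · intro x hx
    have hx' : (x : ℂ) ≠ 0 := hx
    simp only [Set.mem_setOf_eq, myEval_charpoly]
    have key : ∀ C D : Matrix (Fin d) (Fin d) ℂ,
        x • (1 : Matrix (Fin d) (Fin d) ℂ) - C * D = x • (1 + C * ((-x⁻¹) • D)) := by
      intro C D
      rw [Matrix.mul_smul, smul_add, smul_smul, mul_neg, mul_inv_cancel₀ hx',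
        neg_one_smul, sub_eq_add_neg]
    rw [key, key, Matrix.det_smul, Matrix.det_smul,
      Matrix.det_one_add_mul_comm, Matrix.smul_mul, Matrix.mul_smul]
  · have : {x : ℂ | x ≠ 0} = ({0} : Set ℂ)ᶜ := by ext x; simp
    rw [this]
    exact Set.Finite.infinite_compl (Set.finite_singleton 0)

lemma myTrace_sqrt {d : ℕ} {P : Matrix (Fin d) (Fin d) ℂ} (hP : P.PosSemidef) :
    hP.sqrt.trace = ∑ i, ((Real.sqrt (hP.1.eigenvalues i) : ℝ) : ℂ) := by
  rw [Matrix.PosSemidef.sqrt, Matrix.trace_mul_cycle,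
    Unitary.coe_star_mul_self, Matrix.one_mul, Matrix.trace_diagonal]
  rfl

open Polynomial in
lemma myCharpoly_hermitian {d : ℕ} {P : Matrix (Fin d) (Fin d) ℂ} (hP : P.IsHermitian) :
    P.charpoly.roots = (Finset.univ.val.map (fun i => ((hP.eigenvalues i : ℝ) : ℂ))) := by
  have h1 : P.charpoly = (Matrix.diagonal (RCLike.ofReal ∘ hP.eigenvalues : Fin d → ℂ)).charpoly := by
    conv_lhs => rw [hP.spectral_theorem, Unitary.conjStarAlgAut_apply]
    rw [Matrix.mul_assoc, myCharpoly_mul_comm, Matrix.mul_assoc, Unitary.coe_star_mul_self,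
      Matrix.mul_one]
  have h2 : (Matrix.diagonal (RCLike.ofReal ∘ hP.eigenvalues : Fin d → ℂ)).charpoly
      = ∏ i : Fin d, (X - C ((hP.eigenvalues i : ℝ) : ℂ)) := by
    rw [Matrix.charpoly_of_upperTriangular _ (Matrix.blockTriangular_diagonal _)]
    simp [Matrix.diagonal_apply_eq]
  rw [h1, h2]
  have h3 : ∏ i : Fin d, (X - C ((hP.eigenvalues i : ℝ) : ℂ))
      = ((Finset.univ.val.map (fun i => ((hP.eigenvalues i : ℝ) : ℂ))).map
          (fun a : ℂ => X - C a)).prod := by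
    rw [Multiset.map_map]
    rfl
  rw [h3, Polynomial.roots_multiset_prod_X_sub_C]

lemma mySum_sqrt_eig {d : ℕ} {P Q : Matrix (Fin d) (Fin d) ℂ} (hP : P.PosSemidef)
    (hQ : Q.PosSemidef) (h : P.charpoly = Q.charpoly) :
    ∑ i, Real.sqrt (hP.1.eigenvalues i) = ∑ i, Real.sqrt (hQ.1.eigenvalues i) := by
  have hr : (Finset.univ.val.map (fun i => ((hP.1.eigenvalues i : ℝ) : ℂ)))
      = (Finset.univ.val.map (fun i => ((hQ.1.eigenvalues i : ℝ) : ℂ))) := by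
    rw [← myCharpoly_hermitian hP.1, ← myCharpoly_hermitian hQ.1, h]
  have hr2 : (Finset.univ.val.map hP.1.eigenvalues) = (Finset.univ.val.map hQ.1.eigenvalues) := by
    apply Multiset.map_injective Complex.ofReal_injective
    simpa [Multiset.map_map, Function.comp_def] using hr
  calc ∑ i, Real.sqrt (hP.1.eigenvalues i)
      = ((Finset.univ.val.map hP.1.eigenvalues).map Real.sqrt).sum := by
        rw [Multiset.map_map]; rfl
    _ = ((Finset.univ.val.map hQ.1.eigenvalues).map Real.sqrt).sum := by rw [hr2]
    _ = ∑ i, Real.sqrt (hQ.1.eigenvalues i) := by rw [Multiset.map_map]; rfl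

lemma myTraceNorm_eq_sum {d : ℕ} (M : Matrix (Fin d) (Fin d) ℂ) :
    traceNorm M = ∑ i, Real.sqrt ((Matrix.posSemidef_conjTranspose_mul_self M).1.eigenvalues i) := by
  rw [traceNorm, myTrace_sqrt]
  simp

lemma myTraceNorm_eq_of_gram_eq {d : ℕ} (M N : Matrix (Fin d) (Fin d) ℂ)
    (h : Mᴴ * M = Nᴴ * N) : traceNorm M = traceNorm N := by
  rw [myTraceNorm_eq_sum, myTraceNorm_eq_sum]
  exact mySum_sqrt_eig (Matrix.posSemidef_conjTranspose_mul_self M)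
    (Matrix.posSemidef_conjTranspose_mul_self N) (by rw [h])

lemma myTraceNorm_conjTranspose {d : ℕ} (M : Matrix (Fin d) (Fin d) ℂ) :
    traceNorm Mᴴ = traceNorm M := by
  rw [myTraceNorm_eq_sum, myTraceNorm_eq_sum]
  refine mySum_sqrt_eig (Matrix.posSemidef_conjTranspose_mul_self Mᴴ)
    (Matrix.posSemidef_conjTranspose_mul_self M) ?_
  rw [conjTranspose_conjTranspose]
  exact myCharpoly_mul_comm M Mᴴ

lemma myPosSemidef_smul {d : ℕ} {P : Matrix (Fin d) (Fin d) ℂ} (hP : P.PosSemidef)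
    (r : ℝ) (hr : 0 ≤ r) : (((r : ℝ) : ℂ) • P).PosSemidef := by
  constructor
  · unfold Matrix.IsHermitian
    rw [Matrix.conjTranspose_smul, hP.1.eq]
    congr 1
    simp
  · intro x
    exact (hP.smul (a := ((r : ℝ) : ℂ)) (Complex.zero_le_real.mpr hr)).2 x

lemma mySqrt_congr {d : ℕ} {P Q : Matrix (Fin d) (Fin d) ℂ} (hP : P.PosSemidef)
    (hQ : Q.PosSemidef) (h : P = Q) : hP.sqrt = hQ.sqrt := by
  subst h; rfl

lemma mySqrt_smul {d : ℕ} {P : Matrix (Fin d) (Fin d) ℂ} (hP : P.PosSemidef) (r : ℝ) (hr : 0 ≤ r)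
    (h : (((r : ℝ) : ℂ) • P).PosSemidef) :
    h.sqrt = ((Real.sqrt r : ℝ) : ℂ) • hP.sqrt := by
  refine (Matrix.PosSemidef.eq_sqrt_of_sq_eq ?_ h ?_).symm
  · exact myPosSemidef_smul hP.posSemidef_sqrt _ (Real.sqrt_nonneg r)
  · rw [_root_.smul_pow, hP.sq_sqrt, ← Complex.ofReal_pow, Real.sq_sqrt hr]

lemma myTraceNorm_smul {d : ℕ} (M : Matrix (Fin d) (Fin d) ℂ) (r : ℝ) (hr : 0 ≤ r) :
    traceNorm (((r : ℝ) : ℂ) • M) = r * traceNorm M := by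
  unfold traceNorm
  have h1 : (((r : ℝ) : ℂ) • M)ᴴ * (((r : ℝ) : ℂ) • M)
      = (((r^2 : ℝ) : ℂ)) • (Mᴴ * M) := by
    rw [Matrix.conjTranspose_smul, Matrix.smul_mul, Matrix.mul_smul, smul_smul]
    congr 1
    rw [Complex.star_def, Complex.conj_ofReal, ← Complex.ofReal_mul, sq]
  rw [mySqrt_congr (Matrix.posSemidef_conjTranspose_mul_self _)
    (myPosSemidef_smul (Matrix.posSemidef_conjTranspose_mul_self M) (r^2) (by positivity)) h1,
    mySqrt_smul (Matrix.posSemidef_conjTranspose_mul_self M) (r^2) (by positivity),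
    Real.sqrt_sq hr, Matrix.trace_smul]
  simp [Complex.ofReal_mul]

lemma myGram_mul {d : ℕ} (B C : Matrix (Fin d) (Fin d) ℂ) :
    (B * C)ᴴ * (B * C) = Cᴴ * (Bᴴ * B) * C := by
  rw [Matrix.conjTranspose_mul]
  noncomm_ring

/-- Exact conditioning identity: ‖√ρ A √σ‖₁² = F(ρ|√A, σ|√A)·tr(σA)·tr(ρA). -/
theorem traceNorm_sq_eq_fidelity_cond_sqrt {d : ℕ} (ρ σ A : Matrix (Fin d) (Fin d) ℂ)
    (hρ : ρ.PosSemidef) (hρ1 : ρ.trace = 1)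
    (hσ : σ.PosSemidef) (hσ1 : σ.trace = 1)
    (hA : A.PosSemidef) (hA1 : (1 - A).PosSemidef)
    (hρA : 0 < ((ρ * A).trace).re) (hσA : 0 < ((σ * A).trace).re)
    (hcondρ : (((ρ * A).trace)⁻¹ • (hA.sqrt * ρ * hA.sqrt)).PosSemidef)
    (hcondσ : (((σ * A).trace)⁻¹ • (hA.sqrt * σ * hA.sqrt)).PosSemidef) :
    traceNorm (hρ.sqrt * A * hσ.sqrt) ^ 2 =
      traceNorm (hcondρ.sqrt * hcondσ.sqrt) ^ 2 * ((σ * A).trace).re * ((ρ * A).trace).re := by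
  set a : ℝ := ((ρ * A).trace).re with ha_def
  set b : ℝ := ((σ * A).trace).re with hb_def
  have hSA : hA.sqrt.IsHermitian := hA.posSemidef_sqrt.1
  have hSρ : hρ.sqrt.IsHermitian := hρ.posSemidef_sqrt.1
  have hSσ : hσ.sqrt.IsHermitian := hσ.posSemidef_sqrt.1
  -- positive semidefiniteness of the sandwiched matrices
  have hX : (hA.sqrt * ρ * hA.sqrt).PosSemidef := by
    have := hρ.mul_mul_conjTranspose_same hA.sqrt
    rwa [hSA.eq] at this
  have hY : (hA.sqrt * σ * hA.sqrt).PosSemidef := by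
    have := hσ.mul_mul_conjTranspose_same hA.sqrt
    rwa [hSA.eq] at this
  -- the traces are real
  have htrX : (hA.sqrt * ρ * hA.sqrt).trace = (ρ * A).trace := by
    rw [Matrix.trace_mul_cycle, hA.sqrt_mul_self, Matrix.trace_mul_comm]
  have htrY : (hA.sqrt * σ * hA.sqrt).trace = (σ * A).trace := by
    rw [Matrix.trace_mul_cycle, hA.sqrt_mul_self, Matrix.trace_mul_comm]
  have haC : ((a : ℝ) : ℂ) = (ρ * A).trace := by
    rw [ha_def]
    apply Complex.conj_eq_iff_re.mp
    rw [← htrX, ← Complex.star_def, ← Matrix.trace_conjTranspose, hX.1.eq]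
  have hbC : ((b : ℝ) : ℂ) = (σ * A).trace := by
    rw [hb_def]
    apply Complex.conj_eq_iff_re.mp
    rw [← htrY, ← Complex.star_def, ← Matrix.trace_conjTranspose, hY.1.eq]
  have ha0 : (0:ℝ) < a := hρA
  have hb0 : (0:ℝ) < b := hσA
  -- rewrite conditional sqrt
  have hcondρ' : (((a⁻¹ : ℝ) : ℂ) • (hA.sqrt * ρ * hA.sqrt)).PosSemidef :=
    myPosSemidef_smul hX a⁻¹ (by positivity)
  have hcondσ' : (((b⁻¹ : ℝ) : ℂ) • (hA.sqrt * σ * hA.sqrt)).PosSemidef :=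
    myPosSemidef_smul hY b⁻¹ (by positivity)
  have heqρ : ((ρ * A).trace)⁻¹ • (hA.sqrt * ρ * hA.sqrt)
      = ((a⁻¹ : ℝ) : ℂ) • (hA.sqrt * ρ * hA.sqrt) := by
    rw [← haC, Complex.ofReal_inv]
  have heqσ : ((σ * A).trace)⁻¹ • (hA.sqrt * σ * hA.sqrt)
      = ((b⁻¹ : ℝ) : ℂ) • (hA.sqrt * σ * hA.sqrt) := by
    rw [← hbC, Complex.ofReal_inv]
  have hsρ : hcondρ.sqrt = ((Real.sqrt a⁻¹ : ℝ) : ℂ) • hX.sqrt := by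
    rw [mySqrt_congr hcondρ hcondρ' heqρ, mySqrt_smul hX a⁻¹ (by positivity)]
  have hsσ : hcondσ.sqrt = ((Real.sqrt b⁻¹ : ℝ) : ℂ) • hY.sqrt := by
    rw [mySqrt_congr hcondσ hcondσ' heqσ, mySqrt_smul hY b⁻¹ (by positivity)]
  -- defs
  set N : Matrix (Fin d) (Fin d) ℂ := hρ.sqrt * hA.sqrt with hN
  set K : Matrix (Fin d) (Fin d) ℂ := hσ.sqrt * hA.sqrt with hK
  have hNX : hA.sqrt * ρ * hA.sqrt = Nᴴ * N := by
    rw [hN, Matrix.conjTranspose_mul, hSA.eq, hSρ.eq]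
    have e : hA.sqrt * hρ.sqrt * (hρ.sqrt * hA.sqrt)
        = hA.sqrt * (hρ.sqrt * hρ.sqrt) * hA.sqrt := by noncomm_ring
    rw [e, hρ.sqrt_mul_self]
  have hKY : hA.sqrt * σ * hA.sqrt = Kᴴ * K := by
    rw [hK, Matrix.conjTranspose_mul, hSA.eq, hSσ.eq]
    have e : hA.sqrt * hσ.sqrt * (hσ.sqrt * hA.sqrt)
        = hA.sqrt * (hσ.sqrt * hσ.sqrt) * hA.sqrt := by noncomm_ring
    rw [e, hσ.sqrt_mul_self]
  -- the core chain
  have step1 : traceNorm (hX.sqrt * hY.sqrt) = traceNorm (N * hY.sqrt) := by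
    apply myTraceNorm_eq_of_gram_eq
    rw [myGram_mul, myGram_mul, hX.posSemidef_sqrt.1.eq, hX.sqrt_mul_self, hNX]
  have step2 : traceNorm (N * hY.sqrt) = traceNorm (hY.sqrt * Nᴴ) := by
    rw [← myTraceNorm_conjTranspose (N * hY.sqrt), Matrix.conjTranspose_mul,
      hY.posSemidef_sqrt.1.eq]
  have step3 : traceNorm (hY.sqrt * Nᴴ) = traceNorm (K * Nᴴ) := by
    apply myTraceNorm_eq_of_gram_eq
    rw [myGram_mul, myGram_mul, hY.posSemidef_sqrt.1.eq, hY.sqrt_mul_self, hKY]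
  have step4 : traceNorm (K * Nᴴ) = traceNorm (N * Kᴴ) := by
    rw [← myTraceNorm_conjTranspose (K * Nᴴ), Matrix.conjTranspose_mul,
      conjTranspose_conjTranspose]
  have step5 : N * Kᴴ = hρ.sqrt * A * hσ.sqrt := by
    rw [hN, hK, Matrix.conjTranspose_mul, hSA.eq, hSσ.eq]
    have e : hρ.sqrt * hA.sqrt * (hA.sqrt * hσ.sqrt)
        = hρ.sqrt * (hA.sqrt * hA.sqrt) * hσ.sqrt := by noncomm_ring
    rw [e, hA.sqrt_mul_self]
  have core : traceNorm (hX.sqrt * hY.sqrt) = traceNorm (hρ.sqrt * A * hσ.sqrt) := by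
    rw [step1, step2, step3, step4, step5]
  -- scaling
  have hprod : hcondρ.sqrt * hcondσ.sqrt
      = (((Real.sqrt a⁻¹ * Real.sqrt b⁻¹ : ℝ) : ℂ)) • (hX.sqrt * hY.sqrt) := by
    rw [hsρ, hsσ, Matrix.smul_mul, Matrix.mul_smul, smul_smul, ← Complex.ofReal_mul]
  have hscale : traceNorm (hcondρ.sqrt * hcondσ.sqrt)
      = (Real.sqrt a⁻¹ * Real.sqrt b⁻¹) * traceNorm (hX.sqrt * hY.sqrt) := by
    rw [hprod, myTraceNorm_smul _ _ (by positivity)]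
  rw [hscale, core]
  rw [mul_pow, mul_pow, Real.sq_sqrt (by positivity), Real.sq_sqrt (by positivity)]
  field_simp
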